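/- Let H ⊆ ℝ be a finite set and let (u_n)_{n ≥ 0} be a sequence taking values in H, with u₀ = 0, not constant. For j, j' ∈ H, let N_{jj'}(N) be the number of indices 0 ≤ i < N with u_i = j and u_{i+1} = j', and assume that for every pair (j,j') the frequency F_{jj'} := lim_{N→∞} N_{jj'}(N)/N exists. For each N let ℐ(Γ_N) = 2ℓ(Γ_N)/δ(Γ_N) be the inconstancy of the polygonal curve Γ_N through (0,u₀), …, (N,u_N). Then ℐ(Γ_N) converges as N → ∞ and ℐ((u_n)) = Σ_{j∈H} F_{jj} + Σ_{j,j'∈H, j<j'} √(1 + (j'−j)²)(F_{jj'} + F_{j'j}) = 1 + Σ_{j,j'∈H, j<j'} (√(1 + (j'−j)²) − 1)(F_{jj'} + F_{j'j}). -/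

import Mathlib

noncomputable section
open MeasureTheory Real Set Filter
open scoped ENNReal

/-- The point `(x, y)` of the Euclidean plane. -/
def pt (x y : ℝ) : EuclideanSpace ℝ (Fin 2) := WithLp.toLp 2 ![x, y]

/-- The polygonal curve `Γ_N` through `(0,u₀), (1,u₁), …, (N,u_N)`: the union of the
segments joining `(i, u_i)` to `(i+1, u_{i+1})` for `i = 0, …, N−1`. -/
def polyCurve (u : ℕ → ℝ) (N : ℕ) : Set (EuclideanSpace ℝ (Fin 2)) :=
  ⋃ i ∈ Finset.range N, segment ℝ (pt i (u i)) (pt (i + 1) (u (i + 1)))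

/-- The length `ℓ(Γ_N) = Σ_{i<N} √(1 + (u_{i+1} − u_i)²)` of the polygonal curve. -/
def polyLength (u : ℕ → ℝ) (N : ℕ) : ℝ :=
  ∑ i ∈ Finset.range N, Real.sqrt (1 + (u (i + 1) - u i) ^ 2)

/-- The perimeter `δ(Γ_N)` of the convex hull of the polygonal curve: the
one-dimensional Hausdorff measure of the frontier of the convex hull. -/
def polyDelta (u : ℕ → ℝ) (N : ℕ) : ℝ :=
  (μH[1] (frontier (convexHull ℝ (polyCurve u N)))).toReal

/-- The inconstancy `ℐ(Γ_N) := 2 ℓ(Γ_N) / δ(Γ_N)` of the polygonal curve. -/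
def polyIncon (u : ℕ → ℝ) (N : ℕ) : ℝ :=
  2 * polyLength u N / polyDelta u N

/-- The number of indices `0 ≤ i < N` with `u_i = j` and `u_{i+1} = j'`. -/
def blockCount (u : ℕ → ℝ) (N : ℕ) (j j' : ℝ) : ℕ :=
  ((Finset.range N).filter fun i => u i = j ∧ u (i + 1) = j').card


local notation "⟬" x ", " y "⟭" => (inner ℝ x y : ℝ)

abbrev E2 := EuclideanSpace ℝ (Fin 2)

@[simp] lemma pt_apply_zero (x y : ℝ) : pt x y 0 = x := rfl
@[simp] lemma pt_apply_one (x y : ℝ) : pt x y 1 = y := rfl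

lemma pt_eta (p : E2) : p = pt (p 0) (p 1) := by
  ext i
  fin_cases i <;> rfl

@[simp] lemma add_apply' (p q : E2) (i : Fin 2) : (p + q) i = p i + q i := rfl
@[simp] lemma smul_apply' (c : ℝ) (p : E2) (i : Fin 2) : (c • p) i = c * p i := rfl
@[simp] lemma sub_apply' (p q : E2) (i : Fin 2) : (p - q) i = p i - q i := rfl

lemma smul_add_pt (a b x y x' y' : ℝ) :
    a • pt x y + b • pt x' y' = pt (a * x + b * x') (a * y + b * y') := by
  ext i; fin_cases i <;> simp

lemma dist_pt_le (p q : E2) (i : Fin 2) : dist (p i) (q i) ≤ dist p q := by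
  rw [EuclideanSpace.dist_eq]
  rw [Real.dist_eq, ← Real.sqrt_sq_eq_abs]
  apply Real.sqrt_le_sqrt
  rw [Fin.sum_univ_two]
  fin_cases i <;> simp [Real.dist_eq, sq_abs] <;> positivity

lemma lipschitz_coord (i : Fin 2) : LipschitzWith 1 (fun p : E2 => p i) :=
  LipschitzWith.of_dist_le_mul (fun p q => by simpa using dist_pt_le p q i)

lemma dist_pt_pt (x y y' : ℝ) : dist (pt x y) (pt x y') = |y - y'| := by
  rw [EuclideanSpace.dist_eq, Fin.sum_univ_two]
  simp [Real.dist_eq, Real.sqrt_sq_eq_abs]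

lemma continuous_pt_snd (x : ℝ) : Continuous fun y => pt x y := by
  have : (fun y => pt x y) = fun y => x • pt 1 0 + y • pt 0 1 := by
    funext y; ext i; fin_cases i <;> simp
  rw [this]
  fun_prop

def IsProj (K : Set E2) (y x : E2) : Prop :=
  x ∈ K ∧ ∀ w ∈ K, ⟬y - x, w - x⟭ ≤ 0

lemma IsProj.dist_le {K : Set E2} {y1 y2 x1 x2 : E2}
    (h1 : IsProj K y1 x1) (h2 : IsProj K y2 x2) : dist x1 x2 ≤ dist y1 y2 := by
  have t1 : ⟬y1 - x1, x2 - x1⟭ ≤ 0 := h1.2 x2 h2.1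
  have t2 : ⟬y2 - x2, x1 - x2⟭ ≤ 0 := h2.2 x1 h1.1
  have key : ⟬x1 - x2, x1 - x2⟭ ≤ ⟬y1 - y2, x1 - x2⟭ := by
    have t1' : (0:ℝ) ≤ ⟬y1 - x1, x1 - x2⟭ := by
      have e2 : x1 - x2 = -(x2 - x1) := by abel
      rw [e2, inner_neg_right]; linarith
    have e : (y1 - y2) - (x1 - x2) = (y1 - x1) - (y2 - x2) := by abel
    have h4 : (0:ℝ) ≤ ⟬(y1 - y2) - (x1 - x2), x1 - x2⟭ := by
      rw [e, inner_sub_left]; linarith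
    rw [inner_sub_left] at h4; linarith
  have hin : ⟬y1 - y2, x1 - x2⟭ ≤ ‖y1 - y2‖ * ‖x1 - x2‖ := real_inner_le_norm _ _
  have hsq : ‖x1 - x2‖ ^ 2 ≤ ‖y1 - y2‖ * ‖x1 - x2‖ := by
    rw [← real_inner_self_eq_norm_sq]; linarith
  rw [dist_eq_norm, dist_eq_norm]
  nlinarith [norm_nonneg (x1 - x2), norm_nonneg (y1 - y2)]

lemma exists_isProj {K : Set E2} (hK : Convex ℝ K) (hc : IsCompact K) (hne : K.Nonempty)
    (y : E2) : ∃ x, IsProj K y x := by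
  obtain ⟨x, hxK, hmin⟩ := hc.exists_infDist_eq_dist hne y
  refine ⟨x, hxK, ?_⟩
  rw [← norm_eq_iInf_iff_real_inner_le_zero hK hxK]
  rw [← dist_eq_norm, ← hmin, Metric.infDist_eq_iInf]
  exact iInf_congr fun w => dist_eq_norm _ _

lemma frontier_subset_isProj {K R : Set E2} (hK : Convex ℝ K) (hc : IsCompact K)
    {z : E2} (hz : z ∈ interior K) (hKR : K ⊆ R) (hRc : IsClosed R)
    {C : ℝ} (hRb : ∀ p ∈ R, ‖p‖ ≤ C) :
    ∀ x ∈ frontier K, ∃ y ∈ frontier R, IsProj K y x := by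
  intro x hx
  have hxK : x ∈ K := hc.isClosed.frontier_subset hx
  have hxi : x ∉ interior K := by
    rw [hc.isClosed.frontier_eq] at hx; exact hx.2
  obtain ⟨f, hf⟩ := geometric_hahn_banach_open_point (hK.interior) isOpen_interior hxi
  set v := (InnerProductSpace.toDual ℝ E2).symm f with hvdef
  have hv : ∀ w, ⟬v, w⟭ = f w := fun w => InnerProductSpace.toDual_symm_apply
  have hvne : v ≠ 0 := by
    intro h
    have h1 := hf z hz
    have h2 : f z = 0 := by rw [← hv]; simp [h]
    have h3 : f x = 0 := by rw [← hv]; simp [h]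
    rw [h2, h3] at h1; exact lt_irrefl 0 h1
  have hfK : ∀ w ∈ K, f w ≤ f x := by
    intro w hw
    by_contra hlt
    push_neg at hlt
    have hz' : f z < f x := hf z hz
    have hd : 0 < f w - f z := by linarith
    set t := (f w - f x) / (2 * (f w - f z)) with htdef
    have ht0 : 0 < t := div_pos (by linarith) (by linarith)
    have ht1 : t < 1 := by
      rw [htdef, div_lt_one (by linarith)]; linarith
    have hcombo : t • z + (1 - t) • w ∈ interior K :=
      hK.combo_interior_closure_mem_interior hz
        (subset_closure hw) ht0 (by linarith) (by ring)
    have := hf _ hcombo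
    simp only [map_add, ContinuousLinearMap.map_smul, smul_eq_mul] at this
    rw [htdef] at this
    have h2 : (f w - f x) / (2 * (f w - f z)) * (f w - f z) = (f w - f x)/2 := by
      field_simp
    nlinarith
  -- the ray from x in direction v
  set T := {t : ℝ | 0 ≤ t ∧ x + t • v ∈ R} with hTdef
  have hT0 : (0:ℝ) ∈ T := ⟨le_rfl, by simpa using hKR hxK⟩
  have hTclosed : IsClosed T := by
    have : T = Ici (0:ℝ) ∩ (fun t : ℝ => x + t • v) ⁻¹' R := by
      ext t; simp [hTdef]
    rw [this]
    exact isClosed_Ici.inter (hRc.preimage (by continuity))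
  have hvpos : 0 < ‖v‖ := norm_pos_iff.2 hvne
  have hTbdd : BddAbove T := by
    refine ⟨(C + ‖x‖) / ‖v‖, fun t ht => ?_⟩
    have h1 : ‖x + t • v‖ ≤ C := hRb _ ht.2
    have h2 : t * ‖v‖ = ‖t • v‖ := by
      rw [norm_smul, Real.norm_eq_abs, abs_of_nonneg ht.1]
    have h3 : ‖t • v‖ ≤ C + ‖x‖ := by
      have : t • v = (x + t • v) - x := by abel
      rw [this]
      calc ‖(x + t • v) - x‖ ≤ ‖x + t • v‖ + ‖x‖ := norm_sub_le _ _
        _ ≤ C + ‖x‖ := by linarith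
    rw [le_div_iff₀ hvpos]; linarith
  set c := sSup T with hcdef
  have hcT : c ∈ T := hTclosed.csSup_mem ⟨0, hT0⟩ hTbdd
  refine ⟨x + c • v, ?_, hxK, ?_⟩
  · rw [frontier_eq_closure_inter_closure]
    refine ⟨subset_closure hcT.2, ?_⟩
    rw [Metric.mem_closure_iff]
    intro ε hε
    set t' := c + ε / (2 * ‖v‖) with ht'def
    have ht'c : c < t' := by
      rw [ht'def]; have : 0 < ε / (2 * ‖v‖) := by positivity
      linarith
    refine ⟨x + t' • v, ?_, ?_⟩
    · intro hmem
      have : t' ∈ T := ⟨le_trans hcT.1 ht'c.le, hmem⟩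
      exact absurd (le_csSup hTbdd this) (not_le.2 ht'c)
    · have : (x + c • v) - (x + t' • v) = (c - t') • v := by
        rw [sub_smul]; abel
      rw [dist_eq_norm, this, norm_smul, Real.norm_eq_abs]
      rw [abs_of_neg (by linarith)]
      rw [ht'def]
      have : -(c - (c + ε / (2 * ‖v‖))) * ‖v‖ = ε / 2 := by
        field_simp; ring
      rw [this]; linarith
  · intro w hw
    have : (x + c • v) - x = c • v := by abel
    rw [this, real_inner_smul_left, inner_sub_right, hv, hv]
    have := hfK w hw
    have hc0 : 0 ≤ c := hcT.1
    nlinarith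

lemma hausdorff_frontier_le {K R : Set E2} (hK : Convex ℝ K) (hc : IsCompact K)
    (hne : K.Nonempty) {z : E2} (hz : z ∈ interior K) (hKR : K ⊆ R) (hRc : IsClosed R)
    {C : ℝ} (hRb : ∀ p ∈ R, ‖p‖ ≤ C) :
    μH[1] (frontier K) ≤ μH[1] (frontier R) := by
  have hex : ∀ y : E2, ∃ x, IsProj K y x := exists_isProj hK hc hne
  set P : E2 → E2 := fun y => (hex y).choose with hPdef
  have hP : ∀ y, IsProj K y (P y) := fun y => (hex y).choose_spec
  have hlip : LipschitzWith 1 P := by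
    apply LipschitzWith.of_dist_le_mul
    intro a b
    simpa using (hP a).dist_le (hP b)
  have hsub : frontier K ⊆ P '' (frontier R) := by
    intro x hx
    obtain ⟨y, hyR, hyx⟩ := frontier_subset_isProj hK hc hz hKR hRc hRb x hx
    refine ⟨y, hyR, ?_⟩
    have := (hP y).dist_le hyx
    simpa [dist_self, dist_le_zero] using this
  have h1 := hlip.hausdorffMeasure_image_le (d := 1) (by norm_num) (frontier R)
  simp only [ENNReal.coe_one, ENNReal.one_rpow, one_mul] at h1
  exact le_trans (measure_mono hsub) h1

def Rect (a b c d : ℝ) : Set E2 := {p | p 0 ∈ Icc a b ∧ p 1 ∈ Icc c d}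

lemma isClosed_rect (a b c d : ℝ) : IsClosed (Rect a b c d) := by
  have h0 : Continuous fun p : E2 => p 0 := (lipschitz_coord 0).continuous
  have h1 : Continuous fun p : E2 => p 1 := (lipschitz_coord 1).continuous
  exact (isClosed_Icc.preimage h0).inter (isClosed_Icc.preimage h1)

lemma convex_rect (a b c d : ℝ) : Convex ℝ (Rect a b c d) := by
  intro p hp q hq s t hs ht hst
  constructor
  · simpa using (convex_Icc a b) hp.1 hq.1 hs ht hst
  · simpa using (convex_Icc c d) hp.2 hq.2 hs ht hst

lemma norm_le_rect {a b c d : ℝ} (p : E2) (hp : p ∈ Rect a b c d) :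
    ‖p‖ ≤ (|a| + |b|) + (|c| + |d|) := by
  have h : ‖p‖ ≤ |p 0| + |p 1| := by
    rw [EuclideanSpace.norm_eq, Fin.sum_univ_two]
    have : ‖p 0‖ ^ 2 + ‖p 1‖ ^ 2 ≤ (|p 0| + |p 1|) ^ 2 := by
      simp only [Real.norm_eq_abs]
      nlinarith [abs_nonneg (p 0), abs_nonneg (p 1)]
    calc Real.sqrt (‖p 0‖ ^ 2 + ‖p 1‖ ^ 2) ≤ Real.sqrt ((|p 0| + |p 1|) ^ 2) :=
          Real.sqrt_le_sqrt this
      _ = |p 0| + |p 1| := by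
          rw [Real.sqrt_sq_eq_abs]
          exact abs_of_nonneg (by positivity)
  have h0 : |p 0| ≤ |a| + |b| := by
    rcases hp.1 with ⟨h1, h2⟩
    rw [abs_le]; constructor
    · have := neg_abs_le a; linarith [abs_nonneg b]
    · have := le_abs_self b; linarith [abs_nonneg a]
  have h1 : |p 1| ≤ |c| + |d| := by
    rcases hp.2 with ⟨h1, h2⟩
    rw [abs_le]; constructor
    · have := neg_abs_le c; linarith [abs_nonneg d]
    · have := le_abs_self d; linarith [abs_nonneg c]
  linarith

lemma mem_vert_segment {a c d y : ℝ} (hy : y ∈ Icc c d) :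
    pt a y ∈ segment ℝ (pt a c) (pt a d) := by
  have hcd : c ≤ d := hy.1.trans hy.2
  rw [← segment_eq_Icc hcd] at hy
  obtain ⟨s, t, hs, ht, hst, hy⟩ := hy
  refine ⟨s, t, hs, ht, hst, ?_⟩
  rw [smul_add_pt, ← hy]
  simp only [smul_eq_mul]
  congr 1
  rw [← add_mul, hst, one_mul]

lemma mem_horiz_segment {a b c x : ℝ} (hx : x ∈ Icc a b) :
    pt x c ∈ segment ℝ (pt a c) (pt b c) := by
  have hab : a ≤ b := hx.1.trans hx.2
  rw [← segment_eq_Icc hab] at hx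
  obtain ⟨s, t, hs, ht, hst, hx⟩ := hx
  refine ⟨s, t, hs, ht, hst, ?_⟩
  rw [smul_add_pt, ← hx]
  simp only [smul_eq_mul]
  congr 1
  rw [← add_mul, hst, one_mul]

lemma frontier_rect_subset (a b c d : ℝ) :
    frontier (Rect a b c d) ⊆
      segment ℝ (pt a c) (pt b c) ∪ segment ℝ (pt a d) (pt b d)
      ∪ (segment ℝ (pt a c) (pt a d) ∪ segment ℝ (pt b c) (pt b d)) := by
  intro p hp
  have hpR : p ∈ Rect a b c d := (isClosed_rect a b c d).frontier_subset hp
  have hpi : p ∉ interior (Rect a b c d) := by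
    rw [(isClosed_rect a b c d).frontier_eq] at hp; exact hp.2
  have hopen : IsOpen {q : E2 | q 0 ∈ Ioo a b ∧ q 1 ∈ Ioo c d} := by
    have h0 : Continuous fun p : E2 => p 0 := (lipschitz_coord 0).continuous
    have h1 : Continuous fun p : E2 => p 1 := (lipschitz_coord 1).continuous
    exact (isOpen_Ioo.preimage h0).inter (isOpen_Ioo.preimage h1)
  have hni : p ∉ {q : E2 | q 0 ∈ Ioo a b ∧ q 1 ∈ Ioo c d} := by
    intro hmem
    refine hpi (interior_maximal ?_ hopen hmem)
    intro q hq
    exact ⟨⟨hq.1.1.le, hq.1.2.le⟩, ⟨hq.2.1.le, hq.2.2.le⟩⟩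
  rcases lt_or_eq_of_le hpR.1.1 with h | h
  · rcases lt_or_eq_of_le hpR.1.2 with h' | h'
    · rcases lt_or_eq_of_le hpR.2.1 with h2 | h2
      · have h3 : p 1 = d := by
          refine le_antisymm hpR.2.2 (not_lt.1 fun hlt => hni ?_)
          exact ⟨⟨h, h'⟩, ⟨h2, hlt⟩⟩
        refine Or.inl (Or.inr ?_)
        have hpe : p = pt (p 0) d := by rw [← h3]; exact pt_eta p
        rw [hpe]; exact mem_horiz_segment hpR.1
      · refine Or.inl (Or.inl ?_)
        have hpe : p = pt (p 0) c := by rw [h2]; exact pt_eta p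
        rw [hpe]; exact mem_horiz_segment hpR.1
    · refine Or.inr (Or.inr ?_)
      have hpe : p = pt b (p 1) := by rw [← h']; exact pt_eta p
      rw [hpe]; exact mem_vert_segment hpR.2
  · refine Or.inr (Or.inl ?_)
    have hpe : p = pt a (p 1) := by rw [h]; exact pt_eta p
    rw [hpe]; exact mem_vert_segment hpR.2

lemma edist_pt_horiz (a b c : ℝ) : edist (pt a c) (pt b c) = ENNReal.ofReal |a - b| := by
  rw [edist_dist, EuclideanSpace.dist_eq, Fin.sum_univ_two]
  simp [Real.dist_eq, Real.sqrt_sq_eq_abs]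

lemma edist_pt_vert (a c d : ℝ) : edist (pt a c) (pt a d) = ENNReal.ofReal |c - d| := by
  rw [edist_dist, dist_pt_pt]

lemma hausdorff_frontier_rect_le (a b c d : ℝ) :
    μH[1] (frontier (Rect a b c d)) ≤
      ENNReal.ofReal |a - b| + ENNReal.ofReal |a - b|
        + (ENNReal.ofReal |c - d| + ENNReal.ofReal |c - d|) := by
  refine le_trans (measure_mono (frontier_rect_subset a b c d)) ?_
  refine le_trans (measure_union_le _ _) ?_
  gcongr
  · refine le_trans (measure_union_le _ _) ?_
    gcongr
    · rw [hausdorffMeasure_segment, edist_pt_horiz]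
    · rw [hausdorffMeasure_segment, edist_pt_horiz]
  · refine le_trans (measure_union_le _ _) ?_
    gcongr
    · rw [hausdorffMeasure_segment, edist_pt_vert]
    · rw [hausdorffMeasure_segment, edist_pt_vert]

lemma abs_coord_le_norm (p : E2) (i : Fin 2) : |p i| ≤ ‖p‖ := by
  have := dist_pt_le p 0 i
  simpa [Real.dist_eq, dist_eq_norm] using this

lemma lower_bound {K : Set E2} (hK : Convex ℝ K) (hc : IsCompact K) {L : ℝ}
    (hslice : ∀ x ∈ Icc (0:ℝ) L, ∃ y, pt x y ∈ K)
    (hx0 : ∃ x0 ∈ Ioo (0:ℝ) L, ∃ y0 y1 : ℝ, y0 < y1 ∧ pt x0 y0 ∈ K ∧ pt x0 y1 ∈ K)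
    {ε : ℝ} (hε : 0 < ε) (hεL : ε < L / 2) :
    ENNReal.ofReal (2 * (L - 2 * ε)) ≤ μH[1] (frontier K) := by
  have hL : 0 < L := by linarith
  obtain ⟨C, hC⟩ : ∃ C, ∀ p ∈ K, ‖p‖ ≤ C := by
    obtain ⟨r, hr⟩ := hc.isBounded.subset_closedBall 0
    exact ⟨r, fun p hp => by simpa using mem_closedBall_iff_norm.1 (hr hp)⟩
  set S : ℝ → Set ℝ := fun x => {y : ℝ | pt x y ∈ K} with hSdef
  have hSb : ∀ x y, y ∈ S x → |y| ≤ C := by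
    intro x y hy
    calc |y| = |pt x y 1| := by simp
      _ ≤ ‖pt x y‖ := abs_coord_le_norm _ _
      _ ≤ C := hC _ hy
  have hbddA : ∀ x, BddAbove (S x) := fun x => ⟨C, fun y hy => (abs_le.1 (hSb x y hy)).2⟩
  have hbddB : ∀ x, BddBelow (S x) := fun x => ⟨-C, fun y hy => (abs_le.1 (hSb x y hy)).1⟩
  have hSclosed : ∀ x, IsClosed (S x) := fun x => hc.isClosed.preimage (continuous_pt_snd x)
  have hSne : ∀ x ∈ Icc (0:ℝ) L, (S x).Nonempty := hslice
  set g : ℝ → ℝ := fun x => sSup (S x) with hgdef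
  set f : ℝ → ℝ := fun x => sInf (S x) with hfdef
  have hgmem : ∀ x ∈ Icc (0:ℝ) L, pt x (g x) ∈ K := fun x hx =>
    (hSclosed x).csSup_mem (hSne x hx) (hbddA x)
  have hfmem : ∀ x ∈ Icc (0:ℝ) L, pt x (f x) ∈ K := fun x hx =>
    (hSclosed x).csInf_mem (hSne x hx) (hbddB x)
  have hfg : ∀ x ∈ Icc (0:ℝ) L, f x ≤ g x := fun x hx =>
    csInf_le_csSup (hSne x hx) (hbddB x) (hbddA x)
  have hgfront : ∀ x ∈ Icc (0:ℝ) L, pt x (g x) ∈ frontier K := by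
    intro x hx
    rw [frontier_eq_closure_inter_closure]
    refine ⟨subset_closure (hgmem x hx), ?_⟩
    rw [Metric.mem_closure_iff]
    intro δ hδ
    refine ⟨pt x (g x + δ/2), fun hmem => ?_, ?_⟩
    · have := le_csSup (hbddA x) hmem
      simp only [hgdef] at this ⊢
      linarith
    · rw [dist_pt_pt]
      rw [abs_of_nonpos (by linarith)]
      linarith
  have hffront : ∀ x ∈ Icc (0:ℝ) L, pt x (f x) ∈ frontier K := by
    intro x hx
    rw [frontier_eq_closure_inter_closure]
    refine ⟨subset_closure (hfmem x hx), ?_⟩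
    rw [Metric.mem_closure_iff]
    intro δ hδ
    refine ⟨pt x (f x - δ/2), fun hmem => ?_, ?_⟩
    · have := csInf_le (hbddB x) hmem
      simp only [hfdef] at this ⊢
      linarith
    · rw [dist_pt_pt]
      rw [abs_of_nonneg (by linarith)]
      linarith
  have hgconc : ConcaveOn ℝ (Icc (0:ℝ) L) g := by
    refine ⟨convex_Icc _ _, ?_⟩
    intro x hx y hy a b ha hb hab
    refine le_csSup (hbddA _) ?_
    have : pt (a • x + b • y) (a • g x + b • g y) = a • pt x (g x) + b • pt y (g y) := by
      rw [smul_add_pt]; simp [smul_eq_mul]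
    show pt (a • x + b • y) (a • g x + b • g y) ∈ K
    rw [this]
    exact hK (hgmem x hx) (hgmem y hy) ha hb hab
  have hfconv : ConvexOn ℝ (Icc (0:ℝ) L) f := by
    refine ⟨convex_Icc _ _, ?_⟩
    intro x hx y hy a b ha hb hab
    refine csInf_le (hbddB _) ?_
    have : pt (a • x + b • y) (a • f x + b • f y) = a • pt x (f x) + b • pt y (f y) := by
      rw [smul_add_pt]; simp [smul_eq_mul]
    show pt (a • x + b • y) (a • f x + b • f y) ∈ K
    rw [this]
    exact hK (hfmem x hx) (hfmem y hy) ha hb hab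
  -- positivity of g - f on the open interval
  have hpos : ∀ x ∈ Ioo (0:ℝ) L, f x < g x := by
    obtain ⟨x0, hx0m, y0, y1, hy01, hy0K, hy1K⟩ := hx0
    have hx0I : x0 ∈ Icc (0:ℝ) L := ⟨hx0m.1.le, hx0m.2.le⟩
    have hgap : 0 < g x0 - f x0 := by
      have h1 : f x0 ≤ y0 := csInf_le (hbddB x0) hy0K
      have h2 : y1 ≤ g x0 := le_csSup (hbddA x0) hy1K
      linarith
    have hh : ConcaveOn ℝ (Icc (0:ℝ) L) (fun x => g x - f x) := hgconc.sub hfconv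
    have hhn : ∀ x ∈ Icc (0:ℝ) L, 0 ≤ g x - f x := fun x hx => by linarith [hfg x hx]
    intro x hx
    rcases lt_trichotomy x x0 with h | h | h
    · have hb : 0 < x / x0 := div_pos hx.1 hx0m.1
      have hb1 : x / x0 < 1 := (div_lt_one hx0m.1).2 h
      have key := hh.2 (show (0:ℝ) ∈ Icc (0:ℝ) L from ⟨le_rfl, hL.le⟩) hx0I
        (show (0:ℝ) ≤ 1 - x / x0 by linarith) (show (0:ℝ) ≤ x / x0 from hb.le)
        (by ring)
      have he : (1 - x / x0) • (0:ℝ) + (x / x0) • x0 = x := by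
        have hx00 : x0 ≠ 0 := ne_of_gt hx0m.1
        simp only [smul_eq_mul, mul_zero, zero_add]
        field_simp
      rw [he] at key
      have h0 := hhn 0 ⟨le_rfl, hL.le⟩
      have hgap' : 0 < (x / x0) • (g x0 - f x0) := by
        rw [smul_eq_mul]; positivity
      simp only [smul_eq_mul] at key hgap' h0 ⊢
      nlinarith
    · rw [h]; linarith
    · have hd : 0 < L - x0 := by linarith [hx0m.2]
      set b := (x - x0) / (L - x0) with hbdef
      have hb0 : 0 ≤ b := div_nonneg (by linarith) hd.le
      have hb1 : b < 1 := (div_lt_one hd).2 (by linarith [hx.2])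
      have key := hh.2 hx0I (show L ∈ Icc (0:ℝ) L from ⟨hL.le, le_rfl⟩)
        (show (0:ℝ) ≤ 1 - b by linarith) (show (0:ℝ) ≤ b from hb0) (by ring)
      have he : (1 - b) • x0 + b • L = x := by
        simp only [smul_eq_mul, hbdef]
        field_simp
        ring
      rw [he] at key
      have h0 := hhn L ⟨hL.le, le_rfl⟩
      simp only [smul_eq_mul] at key h0 ⊢
      nlinarith
  -- continuity on the open interval
  have hIsub : Icc ε (L - ε) ⊆ Ioo (0: ℝ) L := fun x hx => ⟨lt_of_lt_of_le hε hx.1,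
    lt_of_le_of_lt hx.2 (by linarith)⟩
  have hIsub' : Ioo (0:ℝ) L ⊆ Icc (0:ℝ) L := Ioo_subset_Icc_self
  have hgcont : ContinuousOn g (Ioo (0:ℝ) L) :=
    (hgconc.subset hIsub' (convex_Ioo _ _)).continuousOn isOpen_Ioo
  have hfcont : ContinuousOn f (Ioo (0:ℝ) L) :=
    (hfconv.subset hIsub' (convex_Ioo _ _)).continuousOn isOpen_Ioo
  set G : ℝ → E2 := fun x => x • (pt 1 0) + (g x) • (pt 0 1) with hGdef
  set Fm : ℝ → E2 := fun x => x • (pt 1 0) + (f x) • (pt 0 1) with hFmdef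
  have hGeq : ∀ x, G x = pt x (g x) := by
    intro x; ext i; fin_cases i <;> simp [hGdef]
  have hFmeq : ∀ x, Fm x = pt x (f x) := by
    intro x; ext i; fin_cases i <;> simp [hFmdef]
  have hGcont : ContinuousOn G (Ioo (0:ℝ) L) :=
    ((continuousOn_id).smul continuousOn_const).add (hgcont.smul continuousOn_const)
  have hFmcont : ContinuousOn Fm (Ioo (0:ℝ) L) :=
    ((continuousOn_id).smul continuousOn_const).add (hfcont.smul continuousOn_const)
  set U : Set E2 := G '' (Icc ε (L - ε)) with hUdef
  set V : Set E2 := Fm '' (Icc ε (L - ε)) with hVdef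
  have hUcomp : IsCompact U := isCompact_Icc.image_of_continuousOn (hGcont.mono hIsub)
  have hVcomp : IsCompact V := isCompact_Icc.image_of_continuousOn (hFmcont.mono hIsub)
  have hUsub : U ⊆ frontier K := by
    rintro p ⟨x, hx, rfl⟩
    rw [hGeq]
    exact hgfront x (hIsub' (hIsub hx))
  have hVsub : V ⊆ frontier K := by
    rintro p ⟨x, hx, rfl⟩
    rw [hFmeq]
    exact hffront x (hIsub' (hIsub hx))
  have hdisj : Disjoint U V := by
    rw [Set.disjoint_left]
    rintro p ⟨x, hx, rfl⟩ ⟨x', hx', he⟩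
    have h0 : x' = x := by
      have := congrArg (fun p : E2 => p 0) he
      simpa [hGeq, hFmeq] using this
    have h1 : f x' = g x := by
      have := congrArg (fun p : E2 => p 1) he
      simpa [hGeq, hFmeq] using this
    rw [h0] at h1
    exact absurd h1 (ne_of_lt (hpos x (hIsub hx)))
  -- measure lower bounds via projection to the first coordinate
  have hproj : ∀ (W : Set E2) (φ : ℝ → ℝ) (hW : W = (fun x => pt x (φ x)) '' (Icc ε (L - ε))),
      ENNReal.ofReal (L - 2*ε) ≤ μH[1] W := by
    intro W φ hW
    have himg : (fun p : E2 => p 0) '' W = Icc ε (L - ε) := by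
      rw [hW, Set.image_image]
      simp only [pt_apply_zero, Set.image_id']
    have hle := (lipschitz_coord 0).hausdorffMeasure_image_le (d := 1) (by norm_num) W
    simp only [ENNReal.coe_one, ENNReal.one_rpow, one_mul] at hle
    rw [himg] at hle
    have : μH[1] (Icc ε (L - ε)) = ENNReal.ofReal (L - 2*ε) := by
      rw [MeasureTheory.hausdorffMeasure_real, Real.volume_Icc]
      congr 1; ring
    rw [← this]
    exact hle
  have hU : ENNReal.ofReal (L - 2*ε) ≤ μH[1] U := by
    refine hproj U g ?_
    rw [hUdef]
    exact Set.image_congr fun x _ => hGeq x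
  have hV : ENNReal.ofReal (L - 2*ε) ≤ μH[1] V := by
    refine hproj V f ?_
    rw [hVdef]
    exact Set.image_congr fun x _ => hFmeq x
  calc ENNReal.ofReal (2 * (L - 2 * ε))
      = ENNReal.ofReal (L - 2*ε) + ENNReal.ofReal (L - 2*ε) := by
        rw [← ENNReal.ofReal_add (by linarith) (by linarith)]
        congr 1; ring
    _ ≤ μH[1] U + μH[1] V := add_le_add hU hV
    _ = μH[1] (U ∪ V) := (measure_union hdisj hVcomp.isClosed.measurableSet).symm
    _ ≤ μH[1] (frontier K) := measure_mono (union_subset hUsub hVsub)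

lemma delta_bound (u : ℕ → ℝ) (hu0 : u 0 = 0) {B : ℝ} (hB : ∀ n, |u n| ≤ B)
    {a N : ℕ} (hau : u a ≠ 0) (haN : a < N) (hN : (a:ℝ) * B < N * |u a|) :
    2 * (N:ℝ) ≤ polyDelta u N ∧ polyDelta u N ≤ 2 * N + 4 * B := by
  have hB0 : 0 ≤ B := le_trans (abs_nonneg _) (hB 0)
  have hNpos : 0 < N := Nat.pos_of_ne_zero (by rintro rfl; omega)
  have hNR : (0:ℝ) < N := by exact_mod_cast hNpos
  set K : Set E2 := convexHull ℝ (polyCurve u N) with hKdef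
  have hKconv : Convex ℝ K := convex_convexHull ℝ _
  -- membership of the vertices
  have hptC : ∀ i ≤ N, pt i (u i) ∈ polyCurve u N := by
    intro i hi
    rcases lt_or_eq_of_le hi with h | h
    · exact Set.mem_iUnion₂.2 ⟨i, Finset.mem_range.2 h, left_mem_segment ℝ _ _⟩
    · subst h
      have h1 : i - 1 < i := by omega
      have h2 : i - 1 + 1 = i := by omega
      refine Set.mem_iUnion₂.2 ⟨i - 1, Finset.mem_range.2 h1, ?_⟩
      have h3 : ((i - 1 : ℕ) : ℝ) + 1 = (i : ℝ) := by
        have := congrArg (fun n : ℕ => (n : ℝ)) h2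
        push_cast at this
        linarith
      have h4 : pt (i : ℝ) (u i) = pt (((i-1:ℕ):ℝ) + 1) (u ((i-1) + 1)) := by
        rw [h3, h2]
      rw [h4]
      exact right_mem_segment ℝ _ _
  have hptK : ∀ i ≤ N, pt i (u i) ∈ K := fun i hi =>
    subset_convexHull ℝ _ (hptC i hi)
  -- K inside the rectangle
  have hptRect : ∀ i ≤ N, pt (i:ℝ) (u i) ∈ Rect 0 N (-B) B := by
    intro i hi
    have h1 := abs_le.1 (hB i)
    simp only [Rect, mem_setOf_eq, pt_apply_zero, pt_apply_one, mem_Icc]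
    refine ⟨⟨by positivity, by exact_mod_cast hi⟩, h1.1, h1.2⟩
  have hKRect : K ⊆ Rect 0 N (-B) B := by
    rw [hKdef]
    refine convexHull_min ?_ (convex_rect _ _ _ _)
    rintro p hp
    simp only [polyCurve, Set.mem_iUnion, Finset.mem_range] at hp
    obtain ⟨i, hi, hseg⟩ := hp
    have m2 : pt ((i:ℝ) + 1) (u (i+1)) ∈ Rect 0 N (-B) B := by
      have := hptRect (i+1) (by omega)
      convert this using 2
      push_cast; ring
    exact (convex_rect 0 N (-B) B).segment_subset (hptRect i hi.le) m2 hseg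
  -- compactness
  have hKeq : K = convexHull ℝ ((fun i : ℕ => pt i (u i)) '' (Iic N)) := by
    apply le_antisymm
    · refine convexHull_min ?_ (convex_convexHull ℝ _)
      rintro p hp
      simp only [polyCurve, Set.mem_iUnion, Finset.mem_range] at hp
      obtain ⟨i, hi, hseg⟩ := hp
      have hmem1 : pt (i:ℝ) (u i) ∈ (fun i : ℕ => pt i (u i)) '' (Iic N) :=
        ⟨i, by simpa using hi.le, rfl⟩
      have hmem2 : pt ((i:ℝ) + 1) (u (i+1)) ∈ (fun i : ℕ => pt i (u i)) '' (Iic N) := by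
        have e : ((i+1:ℕ):ℝ) = (i:ℝ) + 1 := by push_cast; ring
        exact ⟨i+1, by simpa using hi, by simp only []; rw [e]⟩
      exact (convex_convexHull ℝ _).segment_subset
        (subset_convexHull ℝ _ hmem1) (subset_convexHull ℝ _ hmem2) hseg
    · refine convexHull_min ?_ hKconv
      rintro q ⟨i, hi, rfl⟩
      exact hptK i (by simpa using hi)
  have hKcomp : IsCompact K := by
    rw [hKeq]
    exact ((Set.finite_Iic N).image _).isCompact_convexHull ℝ
  have hKne : K.Nonempty := ⟨pt 0 (u 0), by simpa using hptK 0 (Nat.zero_le N)⟩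
  -- slices
  have hslice : ∀ x ∈ Icc (0:ℝ) (N:ℝ), pt x ((x / N) * u N) ∈ K := by
    intro x hx
    have h1 : pt 0 0 ∈ K := by
      have := hptK 0 (Nat.zero_le N)
      rw [hu0] at this
      simpa using this
    have h2 : pt N (u N) ∈ K := hptK N le_rfl
    have := hKconv h1 h2 (a := 1 - x / N) (b := x / N)
      (by rw [sub_nonneg, div_le_one hNR]; exact hx.2)
      (div_nonneg hx.1 hNR.le) (by ring)
    rw [smul_add_pt] at this
    have e1 : (1 - x / N) * 0 + (x / N) * (N:ℝ) = x := by field_simp; ring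
    have e2 : (1 - x / N) * 0 + (x / N) * u N = (x / N) * u N := by ring
    rwa [e1, e2] at this
  -- the nondegenerate slice at x0 = a
  have haR : (0:ℝ) < a := by
    have : a ≠ 0 := by rintro rfl; exact hau hu0
    exact_mod_cast Nat.pos_of_ne_zero this
  have hx0 : ∃ x0 ∈ Ioo (0:ℝ) (N:ℝ), ∃ y0 y1 : ℝ, y0 < y1 ∧ pt x0 y0 ∈ K ∧ pt x0 y1 ∈ K := by
    refine ⟨a, ⟨haR, by exact_mod_cast haN⟩, ?_⟩
    set c := u a with hcdef
    set l := ((a:ℝ) / N) * u N with hldef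
    have hcl : c ≠ l := by
      intro h
      have h1 : |(a:ℝ) * u N| ≤ (a:ℝ) * B := by
        rw [abs_mul, abs_of_nonneg haR.le]
        exact mul_le_mul_of_nonneg_left (hB N) haR.le
      have h2 : (N:ℝ) * c = (a:ℝ) * u N := by
        rw [h, hldef]; field_simp
      have h3 : (N:ℝ) * |c| = |(N:ℝ) * c| := by
        rw [abs_mul, abs_of_nonneg hNR.le]
      rw [h2] at h3
      rw [hcdef] at h3
      nlinarith [abs_nonneg ((a:ℝ) * u N)]
    have hcK : pt a c ∈ K := hptK a haN.le
    have hlK : pt a l ∈ K := hslice a ⟨haR.le, by exact_mod_cast haN.le⟩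
    refine ⟨min c l, max c l, min_lt_max.2 hcl, ?_, ?_⟩
    · rcases min_cases c l with ⟨h, _⟩ | ⟨h, _⟩ <;> rw [h]
      exacts [hcK, hlK]
    · rcases max_cases c l with ⟨h, _⟩ | ⟨h, _⟩ <;> rw [h]
      exacts [hcK, hlK]
  -- interior point
  have hint : (interior K).Nonempty := by
    rw [hKconv.interior_nonempty_iff_affineSpan_eq_top]
    obtain ⟨x0, hx0m, y0, y1, h01, h0K, h1K⟩ := hx0
    have hP0 : pt 0 0 ∈ K := by
      have := hptK 0 (Nat.zero_le N)
      rw [hu0] at this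
      simpa using this
    have hAne : ((affineSpan ℝ K : Set E2)).Nonempty := ⟨pt 0 0, subset_affineSpan _ _ hP0⟩
    rw [← AffineSubspace.direction_eq_top_iff_of_nonempty hAne]
    have hv : pt x0 y1 - pt x0 y0 ∈ (affineSpan ℝ K).direction := by
      have := AffineSubspace.vsub_mem_direction
        (subset_affineSpan ℝ K h1K) (subset_affineSpan ℝ K h0K)
      simpa using this
    have hw : pt x0 y0 - pt 0 0 ∈ (affineSpan ℝ K).direction := by
      have := AffineSubspace.vsub_mem_direction
        (subset_affineSpan ℝ K h0K) (subset_affineSpan ℝ K hP0)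
      simpa using this
    rw [Submodule.eq_top_iff']
    intro p
    have hx0ne : x0 ≠ 0 := ne_of_gt hx0m.1
    have hy10 : y1 - y0 ≠ 0 := sub_ne_zero.2 (ne_of_gt h01)
    have hexp : p = (p 0 / x0) • (pt x0 y0 - pt 0 0)
        + ((p 1 - (p 0 / x0) * y0) / (y1 - y0)) • (pt x0 y1 - pt x0 y0) := by
      ext i
      fin_cases i <;> simp <;> field_simp <;> ring
    rw [hexp]
    exact Submodule.add_mem _ (Submodule.smul_mem _ _ hw) (Submodule.smul_mem _ _ hv)
  obtain ⟨z, hz⟩ := hint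
  -- upper bound
  have hupper : μH[1] (frontier K) ≤ ENNReal.ofReal (2 * N + 4 * B) := by
    have h1 := hausdorff_frontier_le hKconv hKcomp hKne hz hKRect
      (isClosed_rect 0 N (-B) B) (fun p hp => norm_le_rect p hp)
    refine le_trans h1 (le_trans (hausdorff_frontier_rect_le 0 N (-B) B) ?_)
    have e1 : |(0:ℝ) - N| = N := by rw [abs_of_nonpos (by linarith)]; ring
    have e2 : |(-B) - B| = 2*B := by rw [abs_of_nonpos (by linarith)]; ring
    rw [e1, e2]
    rw [← ENNReal.ofReal_add (by positivity) (by positivity),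
      ← ENNReal.ofReal_add (by positivity) (by positivity),
      ← ENNReal.ofReal_add (by positivity) (by positivity)]
    exact ENNReal.ofReal_le_ofReal (by linarith)
  have hfin : μH[1] (frontier K) ≠ ⊤ :=
    (lt_of_le_of_lt hupper ENNReal.ofReal_lt_top).ne
  constructor
  · -- lower bound
    by_contra hlt
    push_neg at hlt
    have hδ0 : 0 ≤ polyDelta u N := ENNReal.toReal_nonneg
    set ε := (2 * (N:ℝ) - polyDelta u N) / 8 with hεdef
    have hε : 0 < ε := by rw [hεdef]; linarith
    have hεN : ε < (N:ℝ) / 2 := by rw [hεdef]; linarith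
    have hlow := lower_bound hKconv hKcomp
      (fun x hx => ⟨(x / N) * u N, hslice x hx⟩) hx0 hε hεN
    have := ENNReal.toReal_mono hfin hlow
    rw [ENNReal.toReal_ofReal (by rw [hεdef]; linarith)] at this
    have hδ : polyDelta u N = (μH[1] (frontier K)).toReal := rfl
    rw [← hδ] at this
    rw [hεdef] at this
    linarith
  · have := ENNReal.toReal_mono ENNReal.ofReal_ne_top hupper
    rw [ENNReal.toReal_ofReal (by positivity)] at this
    exact this


lemma sum_block (H : Finset ℝ) (u : ℕ → ℝ) (hvals : ∀ n, u n ∈ H) (g : ℝ → ℝ → ℝ) (N : ℕ) :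
    ∑ i ∈ Finset.range N, g (u i) (u (i + 1))
      = ∑ j ∈ H, ∑ j' ∈ H, (blockCount u N j j' : ℝ) * g j j' := by
  induction N with
  | zero => simp [blockCount]
  | succ n ih =>
    rw [Finset.sum_range_succ, ih]
    have hbc : ∀ j j', (blockCount u (n+1) j j' : ℝ)
        = blockCount u n j j' + (if u n = j ∧ u (n+1) = j' then 1 else 0) := by
      intro j j'
      unfold blockCount
      rw [Finset.range_add_one, Finset.filter_insert]
      split <;> simp [Finset.card_insert_of_notMem, Finset.mem_filter]
    have : ∑ j ∈ H, ∑ j' ∈ H, (blockCount u (n+1) j j' : ℝ) * g j j'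
        = ∑ j ∈ H, ∑ j' ∈ H, ((blockCount u n j j' : ℝ) * g j j'
            + (if u n = j ∧ u (n+1) = j' then g j j' else 0)) := by
      refine Finset.sum_congr rfl fun j _ => Finset.sum_congr rfl fun j' _ => ?_
      rw [hbc]; split <;> ring_nf
    rw [this]
    rw [Finset.sum_congr rfl (fun j _ => Finset.sum_add_distrib), Finset.sum_add_distrib]
    congr 1
    have h1 : ∀ j ∈ H, ∑ j' ∈ H, (if u n = j ∧ u (n+1) = j' then g j j' else 0)
        = if u n = j then g j (u (n+1)) else 0 := by
      intro j _
      by_cases h : u n = j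
      · simp only [h, true_and, if_true]
        rw [Finset.sum_ite_eq H (u (n+1)) (fun j' => g j j')]
        simp [hvals (n+1)]
      · simp [h]
    rw [Finset.sum_congr rfl h1, Finset.sum_ite_eq H (u n) (fun j => g j (u (n+1)))]
    simp [hvals n]

lemma sum_decomp (H : Finset ℝ) (φ : ℝ → ℝ → ℝ) :
    ∑ j ∈ H, ∑ j' ∈ H, φ j j'
      = (∑ j ∈ H, φ j j)
        + ∑ j ∈ H, ∑ j' ∈ H.filter (fun j' => j < j'), (φ j j' + φ j' j) := by
  have key : ∀ j ∈ H, ∑ j' ∈ H, φ j j'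
      = φ j j + ∑ j' ∈ H.filter (fun j' => j < j'), φ j j'
          + ∑ j' ∈ H.filter (fun j' => j' < j), φ j j' := by
    intro j hj
    classical
    rw [← Finset.sum_filter_add_sum_filter_not H (fun j' => j < j') (φ j)]
    have : H.filter (fun j' => ¬ j < j') =
        insert j (H.filter fun j' => j' < j) := by
      ext x
      simp only [Finset.mem_filter, Finset.mem_insert, not_lt]
      constructor
      · rintro ⟨hx, hle⟩
        rcases eq_or_lt_of_le hle with h | h
        · exact Or.inl h
        · exact Or.inr ⟨hx, h⟩
      · rintro (rfl | ⟨hx, hlt⟩)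
        · exact ⟨hj, le_rfl⟩
        · exact ⟨hx, hlt.le⟩
    rw [this, Finset.sum_insert (by simp)]
    ring
  rw [Finset.sum_congr rfl key]
  have swap : ∑ j ∈ H, ∑ j' ∈ H.filter (fun j' => j' < j), φ j j'
      = ∑ j ∈ H, ∑ j' ∈ H.filter (fun j' => j < j'), φ j' j := by
    refine Finset.sum_comm' ?_
    intro x y
    simp only [Finset.mem_filter]
    tauto
  simp only [Finset.sum_add_distrib, swap]
  ring

lemma tendsto_length_div (H : Finset ℝ) (u : ℕ → ℝ) (hvals : ∀ n, u n ∈ H)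
    (F : ℝ → ℝ → ℝ)
    (hF : ∀ j ∈ H, ∀ j' ∈ H,
      Tendsto (fun N : ℕ => (blockCount u N j j' : ℝ) / N) atTop (nhds (F j j'))) :
    Tendsto (fun N : ℕ => polyLength u N / N) atTop
      (nhds (∑ j ∈ H, ∑ j' ∈ H, Real.sqrt (1 + (j' - j) ^ 2) * F j j')) := by
  have hrw : ∀ N : ℕ, polyLength u N / N
      = ∑ j ∈ H, ∑ j' ∈ H, Real.sqrt (1 + (j' - j) ^ 2) * ((blockCount u N j j' : ℝ) / N) := by
    intro N
    unfold polyLength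
    rw [sum_block H u hvals (fun a b => Real.sqrt (1 + (b - a) ^ 2)) N]
    rw [Finset.sum_div]
    refine Finset.sum_congr rfl fun j _ => ?_
    rw [Finset.sum_div]
    refine Finset.sum_congr rfl fun j' _ => ?_
    ring
  simp only [hrw]
  exact tendsto_finset_sum _ fun j hj => tendsto_finset_sum _ fun j' hj' =>
    ((hF j hj j' hj').const_mul _)

lemma sumF_eq_one (H : Finset ℝ) (u : ℕ → ℝ) (hvals : ∀ n, u n ∈ H)
    (F : ℝ → ℝ → ℝ)
    (hF : ∀ j ∈ H, ∀ j' ∈ H,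
      Tendsto (fun N : ℕ => (blockCount u N j j' : ℝ) / N) atTop (nhds (F j j'))) :
    ∑ j ∈ H, ∑ j' ∈ H, F j j' = 1 := by
  have h1 : Tendsto (fun N : ℕ => ∑ j ∈ H, ∑ j' ∈ H, (blockCount u N j j' : ℝ) / N) atTop
      (nhds (∑ j ∈ H, ∑ j' ∈ H, F j j')) :=
    tendsto_finset_sum _ fun j hj => tendsto_finset_sum _ fun j' hj' => hF j hj j' hj'
  have h2 : ∀ᶠ N : ℕ in atTop, ∑ j ∈ H, ∑ j' ∈ H, (blockCount u N j j' : ℝ) / N = 1 := by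
    filter_upwards [eventually_ge_atTop 1] with N hN
    have := sum_block H u hvals (fun _ _ => (1:ℝ)) N
    simp only [mul_one, Finset.sum_const, nsmul_eq_mul] at this
    have hsum : ∑ j ∈ H, ∑ j' ∈ H, (blockCount u N j j' : ℝ) = N := by
      simpa using this.symm
    have hN0 : (N:ℝ) ≠ 0 := by positivity
    calc ∑ j ∈ H, ∑ j' ∈ H, (blockCount u N j j' : ℝ) / N
        = (∑ j ∈ H, ∑ j' ∈ H, (blockCount u N j j' : ℝ)) / N := by
          rw [Finset.sum_div]
          exact Finset.sum_congr rfl fun j _ => (Finset.sum_div _ _ _).symm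
      _ = 1 := by rw [hsum]; field_simp
  exact tendsto_nhds_unique (h1.congr' h2) tendsto_const_nhds

/-- Inconstancy of a non-constant sequence taking finitely many values (in a finite set
`H ⊆ ℝ`) with `u₀ = 0`, all of whose length-2 block frequencies `F_{jj'}` exist: the
inconstancy `lim_N ℐ(Γ_N)` exists and equals
`Σ_{j∈H} F_{jj} + Σ_{j<j'} √(1+(j'−j)²)(F_{jj'} + F_{j'j})
  = 1 + Σ_{j<j'} (√(1+(j'−j)²) − 1)(F_{jj'} + F_{j'j})`. -/
theorem polyIncon_finite_values_infinite
    (H : Finset ℝ) (u : ℕ → ℝ) (hvals : ∀ n, u n ∈ H)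
    (hu0 : u 0 = 0) (hne : ∃ n, u n ≠ u 0)
    (F : ℝ → ℝ → ℝ)
    (hF : ∀ j ∈ H, ∀ j' ∈ H,
      Tendsto (fun N : ℕ => (blockCount u N j j' : ℝ) / N) atTop (nhds (F j j'))) :
    Tendsto (fun N : ℕ => polyIncon u N) atTop
      (nhds (∑ j ∈ H, F j j
        + ∑ j ∈ H, ∑ j' ∈ H.filter (fun j' => j < j'),
            Real.sqrt (1 + (j' - j) ^ 2) * (F j j' + F j' j))) ∧
    ∑ j ∈ H, F j j
        + ∑ j ∈ H, ∑ j' ∈ H.filter (fun j' => j < j'),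
            Real.sqrt (1 + (j' - j) ^ 2) * (F j j' + F j' j)
      = 1 + ∑ j ∈ H, ∑ j' ∈ H.filter (fun j' => j < j'),
            (Real.sqrt (1 + (j' - j) ^ 2) - 1) * (F j j' + F j' j) := by
  classical
  have hHne : H.Nonempty := ⟨u 0, hvals 0⟩
  set B := H.sup' hHne (fun j => |j|) with hBdef
  have hB : ∀ n, |u n| ≤ B := fun n => Finset.le_sup' _ (hvals n)
  have hB0 : 0 ≤ B := le_trans (abs_nonneg _) (hB 0)
  obtain ⟨a, ha⟩ := hne
  rw [hu0] at ha
  have hua : 0 < |u a| := abs_pos.2 ha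
  set N1 : ℕ := ⌈((a:ℝ) * B) / |u a|⌉₊ + a + 1 with hN1def
  have hbound : ∀ N : ℕ, N1 ≤ N →
      2 * (N:ℝ) ≤ polyDelta u N ∧ polyDelta u N ≤ 2 * N + 4 * B := by
    intro N hNN
    have haN : a < N := by omega
    have hceil : ⌈((a:ℝ) * B) / |u a|⌉₊ < N := by omega
    have hNc : ((a:ℝ) * B) / |u a| < N := by
      calc ((a:ℝ)*B)/|u a| ≤ (⌈((a:ℝ)*B)/|u a|⌉₊ : ℝ) := Nat.le_ceil _
        _ < N := by exact_mod_cast hceil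
    have hN : (a:ℝ) * B < N * |u a| := by
      rw [div_lt_iff₀ hua] at hNc; linarith
    exact delta_bound u hu0 hB ha haN hN
  -- limit of delta / N
  have hdelta : Tendsto (fun N : ℕ => polyDelta u N / N) atTop (nhds 2) := by
    apply tendsto_of_tendsto_of_tendsto_of_le_of_le' (g := fun _ : ℕ => (2:ℝ))
      (h := fun N : ℕ => 2 + 4*B/N) tendsto_const_nhds
    · have h0 : Tendsto (fun N : ℕ => 4*B/N) atTop (nhds 0) :=
        tendsto_const_div_atTop_nhds_zero_nat (4*B)
      simpa using tendsto_const_nhds.add h0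
    · filter_upwards [eventually_ge_atTop (max N1 1)] with N hNm
      have h := (hbound N (le_trans (le_max_left _ _) hNm)).1
      have hN0 : (0:ℝ) < N := by
        have h1 : 1 ≤ N := le_trans (le_max_right _ _) hNm
        exact_mod_cast h1
      rw [le_div_iff₀ hN0]
      linarith
    · filter_upwards [eventually_ge_atTop (max N1 1)] with N hNm
      have h := (hbound N (le_trans (le_max_left _ _) hNm)).2
      have hN0 : (0:ℝ) < N := by
        have h1 : 1 ≤ N := le_trans (le_max_right _ _) hNm
        exact_mod_cast h1
      rw [div_le_iff₀ hN0]
      have he : (2 + 4*B/N) * N = 2*N + 4*B := by field_simp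
      rw [he]
      exact h
  have hlen := tendsto_length_div H u hvals F hF
  set Ltot := ∑ j ∈ H, ∑ j' ∈ H, Real.sqrt (1 + (j' - j) ^ 2) * F j j' with hLtotdef
  -- identification of the limit sum
  have hLS : Ltot = ∑ j ∈ H, F j j
      + ∑ j ∈ H, ∑ j' ∈ H.filter (fun j' => j < j'),
          Real.sqrt (1 + (j' - j) ^ 2) * (F j j' + F j' j) := by
    rw [hLtotdef, sum_decomp H (fun j j' => Real.sqrt (1 + (j' - j) ^ 2) * F j j')]
    congr 1
    · refine Finset.sum_congr rfl fun j _ => ?_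
      simp [Real.sqrt_one]
    · refine Finset.sum_congr rfl fun j _ => Finset.sum_congr rfl fun j' _ => ?_
      have he : (j - j')^2 = (j' - j)^2 := by ring
      rw [he]; ring
  have hone : (∑ j ∈ H, F j j)
      + ∑ j ∈ H, ∑ j' ∈ H.filter (fun j' => j < j'), (F j j' + F j' j) = 1 := by
    rw [← sum_decomp H F]
    exact sumF_eq_one H u hvals F hF
  constructor
  · -- the main limit
    have h2 : Tendsto (fun N : ℕ =>
        (2 * (polyLength u N / N)) / (polyDelta u N / N)) atTop (nhds ((2 * Ltot)/2)) :=
      (hlen.const_mul 2).div hdelta two_ne_zero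
    have heq : ∀ᶠ N : ℕ in atTop,
        (2 * (polyLength u N / N)) / (polyDelta u N / N) = polyIncon u N := by
      filter_upwards [eventually_ge_atTop (max N1 1)] with N hNm
      have h := (hbound N (le_trans (le_max_left _ _) hNm)).1
      have hN0 : (0:ℝ) < N := by
        have h1 : 1 ≤ N := le_trans (le_max_right _ _) hNm
        exact_mod_cast h1
      have hd0 : polyDelta u N ≠ 0 := ne_of_gt (lt_of_lt_of_le (by positivity) h)
      unfold polyIncon
      field_simp
    have h3 := h2.congr' heq
    have h4 : (2 * Ltot) / 2 = Ltot := by ring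
    rw [h4] at h3
    rw [← hLS]
    exact h3
  · -- the algebraic identity
    have hsplit : ∑ j ∈ H, ∑ j' ∈ H.filter (fun j' => j < j'),
        Real.sqrt (1 + (j' - j) ^ 2) * (F j j' + F j' j)
      = (∑ j ∈ H, ∑ j' ∈ H.filter (fun j' => j < j'), (F j j' + F j' j))
        + ∑ j ∈ H, ∑ j' ∈ H.filter (fun j' => j < j'),
            (Real.sqrt (1 + (j' - j) ^ 2) - 1) * (F j j' + F j' j) := by
      rw [← Finset.sum_add_distrib]
      refine Finset.sum_congr rfl fun j _ => ?_
      rw [← Finset.sum_add_distrib]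
      refine Finset.sum_congr rfl fun j' _ => ?_
      ring
    rw [hsplit]
    linarith [hone]
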